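/- Let α ∈ (0,1], ν ≥ 0, and K : ℕ → ℝ with c₁ ℓ^{-ν} ≤ |K(ℓ)| ≤ c₂ ℓ^{-ν} for all ℓ ≥ 1 (c₁, c₂ > 0). For ε ∈ (0, e^{-1}) define M_d(ε) = min{ ℓ ≥ 1 : |K(ℓ)| ≤ ℓ^{α/2} ε^α (log(1/ε²))^{2/3} }. Then there exists ε₀ > 0, depending only on c₁, c₂, ν, α, such that for all ε ∈ (0, ε₀) and for every function Y : ℕ → ℝ satisfying |Y(ℓ) - K(ℓ)| ≤ |K(ℓ)|/2 for all 1 ≤ ℓ ≤ M_d(ε), the stopping frequency M(ε) = min{ ℓ ≥ 1 : |Y(ℓ)| ≤ ℓ^{α/2} ε^α log(1/ε²) } satisfies M(ε) ≤ M_d(ε). -/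
import Mathlib


/-- The Fourier-domain stopping frequency `min{ ℓ ≥ 1 : |K(ℓ)| ≤ thr ℓ }`. -/
noncomputable def stopFreq (K : ℕ → ℝ) (thr : ℕ → ℝ) : ℕ :=
  sInf {ℓ : ℕ | 1 ≤ ℓ ∧ |K ℓ| ≤ thr ℓ}

/-- The threshold `θ_d(ε) = ε^α (log(1/ε²))^{2/3}`. -/
noncomputable def thetaD (α ε : ℝ) : ℝ := ε ^ α * (Real.log (1 / ε ^ 2)) ^ ((2 : ℝ) / 3)

/-- The upper reference frequency `M_d(ε) = min{ ℓ ≥ 1 : |K(ℓ)| ≤ ℓ^{α/2} θ_d(ε) }`. -/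
noncomputable def Md (K : ℕ → ℝ) (α ε : ℝ) : ℕ :=
  stopFreq K (fun ℓ => (ℓ : ℝ) ^ (α / 2) * thetaD α ε)

/-- The empirical stopping frequency `M(ε) = min{ ℓ ≥ 1 : |Y(ℓ)| ≤ ℓ^{α/2} ε^α log(1/ε²) }`. -/
noncomputable def Mstop (Y : ℕ → ℝ) (α ε : ℝ) : ℕ :=
  stopFreq Y (fun ℓ => (ℓ : ℝ) ^ (α / 2) * (ε ^ α * Real.log (1 / ε ^ 2)))

/-- Deterministic core of `{M > M_d}` being negligible: if the observed Fourier
coefficients `Y` are within `|K(ℓ)|/2` of `K(ℓ)` for all `ℓ ≤ M_d(ε)`, then for all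
sufficiently small `ε` the empirical stopping rule satisfies `M(ε) ≤ M_d(ε)`. -/
theorem M_le_Md (α ν c₁ c₂ : ℝ) (hα : 0 < α) (hα1 : α ≤ 1) (hν : 0 ≤ ν)
    (hc₁ : 0 < c₁) (hc₂ : 0 < c₂) (K : ℕ → ℝ)
    (hK : ∀ ℓ : ℕ, 1 ≤ ℓ →
      c₁ * (ℓ : ℝ) ^ (-ν) ≤ |K ℓ| ∧ |K ℓ| ≤ c₂ * (ℓ : ℝ) ^ (-ν)) :
    ∃ ε₀ : ℝ, 0 < ε₀ ∧ ε₀ ≤ Real.exp (-1) ∧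
      ∀ ε : ℝ, 0 < ε → ε < ε₀ →
        ∀ Y : ℕ → ℝ, (∀ ℓ : ℕ, 1 ≤ ℓ → ℓ ≤ Md K α ε → |Y ℓ - K ℓ| ≤ |K ℓ| / 2) →
          Mstop Y α ε ≤ Md K α ε := by
  refine ⟨Real.exp (-2), Real.exp_pos _, Real.exp_le_exp.2 (by norm_num), ?_⟩
  intro ε hε hεlt Y hY
  set L := Real.log (1 / ε ^ 2) with hLdef
  have hlogε : Real.log ε < -2 := by
    have := Real.log_lt_log hε hεlt
    simpa using this
  have hL4 : 4 < L := by
    have hLe : L = -2 * Real.log ε := by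
      rw [hLdef, one_div, Real.log_inv, Real.log_pow]; push_cast; ring
    rw [hLe]; nlinarith
  have hLpos : 0 < L := by linarith
  have hεα : 0 < ε ^ α := Real.rpow_pos_of_pos hε α
  have hθpos : 0 < thetaD α ε := by
    have : 0 < L ^ ((2:ℝ)/3) := Real.rpow_pos_of_pos hLpos _
    exact mul_pos hεα this
  set θ := thetaD α ε with hθdef
  -- the defining set of Md is nonempty
  have hSne : {ℓ : ℕ | 1 ≤ ℓ ∧ |K ℓ| ≤ (fun ℓ : ℕ => (ℓ : ℝ) ^ (α / 2) * θ) ℓ}.Nonempty := by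
    set x₀ : ℝ := max 1 ((c₂/θ) ^ ((2:ℝ)/α)) with hx₀
    have hx₀1 : (1:ℝ) ≤ x₀ := le_max_left _ _
    have hN1 : 1 ≤ ⌈x₀⌉₊ := Nat.one_le_cast.mp (le_trans hx₀1 (Nat.le_ceil x₀))
    refine ⟨⌈x₀⌉₊, hN1, ?_⟩
    have hNx : x₀ ≤ (⌈x₀⌉₊ : ℝ) := Nat.le_ceil x₀
    have hNR : (1:ℝ) ≤ (⌈x₀⌉₊ : ℝ) := le_trans hx₀1 hNx
    have hc₂θ : 0 ≤ c₂/θ := le_of_lt (div_pos hc₂ hθpos)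
    have hpow : c₂/θ ≤ (⌈x₀⌉₊ : ℝ) ^ (α/2) := by
      have h1 : ((c₂/θ) ^ ((2:ℝ)/α)) ^ (α/2) ≤ (⌈x₀⌉₊ : ℝ) ^ (α/2) := by
        apply Real.rpow_le_rpow (Real.rpow_nonneg hc₂θ _)
          (le_trans (le_max_right _ _) hNx) (by positivity)
      calc c₂/θ = (c₂/θ) ^ ((2:ℝ)/α * (α/2)) := by
            rw [div_mul_div_comm, mul_comm, div_self (by positivity), Real.rpow_one]
        _ = ((c₂/θ) ^ ((2:ℝ)/α)) ^ (α/2) := Real.rpow_mul hc₂θ _ _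
        _ ≤ _ := h1
    have hKb := (hK ⌈x₀⌉₊ hN1).2
    have hν1 : ((⌈x₀⌉₊ : ℝ)) ^ (-ν) ≤ 1 :=
      Real.rpow_le_one_of_one_le_of_nonpos hNR (by linarith)
    calc |K ⌈x₀⌉₊| ≤ c₂ * (⌈x₀⌉₊ : ℝ) ^ (-ν) := hKb
      _ ≤ c₂ * 1 := by nlinarith
      _ = (c₂/θ) * θ := by field_simp
      _ ≤ (⌈x₀⌉₊ : ℝ) ^ (α/2) * θ := by nlinarith
  have hMdmem := Nat.sInf_mem hSne
  have hMd1 : 1 ≤ Md K α ε := hMdmem.1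
  have hMdK : |K (Md K α ε)| ≤ ((Md K α ε : ℕ) : ℝ) ^ (α/2) * θ := hMdmem.2
  -- show Md is in the empirical set
  have hYK := hY (Md K α ε) hMd1 le_rfl
  have hYbound : |Y (Md K α ε)| ≤ (3/2) * |K (Md K α ε)| := by
    have := abs_sub_abs_le_abs_sub (Y (Md K α ε)) (K (Md K α ε))
    linarith
  have hLcmp : (3/2) * L ^ ((2:ℝ)/3) ≤ L := by
    have h32 : (3/2 : ℝ) ≤ L ^ ((1:ℝ)/3) := by
      have h1 : ((27/8 : ℝ)) ^ ((1:ℝ)/3) ≤ L ^ ((1:ℝ)/3) :=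
        Real.rpow_le_rpow (by norm_num) (by linarith) (by norm_num)
      have h2 : ((27/8 : ℝ)) ^ ((1:ℝ)/3) = 3/2 := by
        have : ((27/8 : ℝ)) = (3/2 : ℝ) ^ (3:ℝ) := by
          rw [show (3:ℝ) = ((3:ℕ) : ℝ) by norm_num, Real.rpow_natCast]; norm_num
        rw [this, ← Real.rpow_mul (by norm_num)]; norm_num
      linarith
    have hsplit : L = L ^ ((1:ℝ)/3) * L ^ ((2:ℝ)/3) := by
      rw [← Real.rpow_add hLpos]; norm_num
    have hLp : 0 < L ^ ((2:ℝ)/3) := Real.rpow_pos_of_pos hLpos _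
    nlinarith
  have hmem : Md K α ε ∈ {ℓ : ℕ | 1 ≤ ℓ ∧
      |Y ℓ| ≤ (fun ℓ : ℕ => (ℓ : ℝ) ^ (α/2) * (ε ^ α * L)) ℓ} := by
    refine ⟨hMd1, ?_⟩
    have hMp : (0:ℝ) ≤ ((Md K α ε : ℕ) : ℝ) ^ (α/2) := by positivity
    have hθL : θ = ε ^ α * L ^ ((2:ℝ)/3) := rfl
    calc |Y (Md K α ε)| ≤ (3/2) * |K (Md K α ε)| := hYbound
      _ ≤ (3/2) * (((Md K α ε : ℕ) : ℝ) ^ (α/2) * θ) := by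
          have := abs_nonneg (K (Md K α ε)); nlinarith
      _ = ((Md K α ε : ℕ) : ℝ) ^ (α/2) * (ε ^ α * ((3/2) * L ^ ((2:ℝ)/3))) := by
          rw [hθL]; ring
      _ ≤ ((Md K α ε : ℕ) : ℝ) ^ (α/2) * (ε ^ α * L) := by
          apply mul_le_mul_of_nonneg_left _ hMp
          exact mul_le_mul_of_nonneg_left hLcmp (le_of_lt hεα)
  exact Nat.sInf_le hmem
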